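/- Let M > 0, c > 0, u₀ with 0 < u₀ ≤ c, and let n be a positive integer with n < M u₀ c. Then the tail T = ∑_{k=0}^{n-1} ((Mc²)^{-k} / (4^k k!)) Γ(2k, 2M u₀ c) satisfies T < 2 e^{-M u₀ c}, where Γ(a,χ) is the upper incomplete gamma function (with Γ(0,χ) interpreted as the exponential integral term, or the k=0 term bounded directly). -/

import Mathlib

open MeasureTheory Real Finset

open Filter Set Topology in
lemma integral_exp_neg_mul_Ioi' {b : ℝ} (hb : 0 < b) (a : ℝ) :
    ∫ x in Set.Ioi a, Real.exp (-b * x) = Real.exp (-b * a) / b := by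
  have hd : ∀ x ∈ Ici a, HasDerivAt (fun t => -Real.exp (-b * t) / b)
      (Real.exp (-b * x)) x := by
    intro x _
    have h1 : HasDerivAt (fun t : ℝ => -b * t) (-b) x := by
      simpa using (hasDerivAt_id x).const_mul (-b)
    have h2 := (h1.exp).neg.div_const b
    convert h2 using 1
    any_goals rfl
    rw [mul_neg, neg_neg, mul_div_assoc, div_self (ne_of_gt hb), mul_one]
  have hint : IntegrableOn (fun x => Real.exp (-b * x)) (Ioi a) :=
    exp_neg_integrableOn_Ioi a hb
  have h1 : Tendsto (fun t : ℝ => b * t) atTop atTop :=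
    Tendsto.const_mul_atTop hb tendsto_id
  have h2 : Tendsto (fun t : ℝ => Real.exp (-b * t)) atTop (𝓝 0) := by
    have heq : (fun t : ℝ => Real.exp (-b * t)) = (fun x => Real.exp (-x)) ∘ (fun t : ℝ => b * t) := by
      ext t; simp [neg_mul]
    rw [heq]
    exact Real.tendsto_exp_neg_atTop_nhds_zero.comp h1
  have ht : Tendsto (fun t => -Real.exp (-b * t) / b) atTop (𝓝 0) := by
    simpa using h2.neg.div_const b
  rw [integral_Ioi_of_hasDerivAt_of_tendsto' hd hint ht]
  ring


/-- The upper incomplete gamma function `Γ(a, χ) = ∫_χ^∞ e^{-t} t^{a-1} dt`. -/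
noncomputable def upperGamma (a χ : ℝ) : ℝ :=
  ∫ t in Set.Ioi χ, Real.exp (-t) * t ^ (a - 1)

open Filter Set Topology in
lemma upperGamma_le {a χ : ℝ} (hχ : 1 ≤ χ) (ha : 0 ≤ a) (haχ : a ≤ χ) :
    upperGamma a χ ≤ χ ^ a * Real.exp (-χ) := by
  have hχ0 : (0:ℝ) < χ := lt_of_lt_of_le one_pos hχ
  have hnn : 0 ≤ᵐ[volume.restrict (Set.Ioi χ)]
      fun t => Real.exp (-t) * t ^ (a - 1) := by
    filter_upwards [ae_restrict_mem measurableSet_Ioi] with t ht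
    have ht0 : 0 < t := hχ0.trans ht
    positivity
  rcases le_or_gt a 1 with h1 | h1
  · -- a ≤ 1 : t ^ (a-1) ≤ χ ^ (a-1)
    have hgi : Integrable (fun t : ℝ => χ ^ (a - 1) * Real.exp (-1 * t))
        (volume.restrict (Set.Ioi χ)) :=
      (exp_neg_integrableOn_Ioi χ one_pos).const_mul _
    have hle : (fun t => Real.exp (-t) * t ^ (a - 1)) ≤ᵐ[volume.restrict (Set.Ioi χ)]
        fun t => χ ^ (a - 1) * Real.exp (-1 * t) := by
      filter_upwards [ae_restrict_mem measurableSet_Ioi] with t ht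
      have htp : t ^ (a - 1) ≤ χ ^ (a - 1) :=
        Real.rpow_le_rpow_of_nonpos hχ0 (le_of_lt ht) (by linarith)
      calc Real.exp (-t) * t ^ (a - 1) ≤ Real.exp (-t) * χ ^ (a - 1) := by
            exact mul_le_mul_of_nonneg_left htp (le_of_lt (Real.exp_pos _))
        _ = χ ^ (a - 1) * Real.exp (-1 * t) := by rw [neg_one_mul]; ring
    have := integral_mono_of_nonneg hnn hgi hle
    rw [upperGamma]
    refine this.trans ?_
    rw [MeasureTheory.integral_const_mul, integral_exp_neg_mul_Ioi' one_pos]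
    have : χ ^ (a - 1) ≤ χ ^ a := Real.rpow_le_rpow_of_exponent_le hχ (by linarith)
    rw [neg_one_mul]
    calc χ ^ (a-1) * (Real.exp (-χ) / 1) = χ ^ (a-1) * Real.exp (-χ) := by ring
      _ ≤ χ ^ a * Real.exp (-χ) :=
        mul_le_mul_of_nonneg_right this (le_of_lt (Real.exp_pos _))
  · -- 1 < a
    set b := 1 - (a - 1) / χ with hbdef
    have hbχ : 1 / χ ≤ b := by
      rw [hbdef, div_le_iff₀ hχ0, sub_mul, div_mul_cancel₀ _ (ne_of_gt hχ0)]
      linarith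
    have hb : 0 < b := lt_of_lt_of_le (by positivity) hbχ
    set C := χ ^ (a - 1) * Real.exp (-(a - 1)) with hC
    have hgi : Integrable (fun t : ℝ => C * Real.exp (-b * t))
        (volume.restrict (Set.Ioi χ)) :=
      (exp_neg_integrableOn_Ioi χ hb).const_mul _
    have hle : (fun t => Real.exp (-t) * t ^ (a - 1)) ≤ᵐ[volume.restrict (Set.Ioi χ)]
        fun t => C * Real.exp (-b * t) := by
      filter_upwards [ae_restrict_mem measurableSet_Ioi] with t ht
      have ht0 : 0 < t := hχ0.trans ht
      have hlog : Real.log (t / χ) ≤ t / χ - 1 :=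
        Real.log_le_sub_one_of_pos (by positivity)
      have hpt : t ^ (a - 1) ≤ χ ^ (a - 1) * Real.exp ((a - 1) * (t / χ - 1)) := by
        have h2 : t ^ (a - 1) = χ ^ (a - 1) * (t / χ) ^ (a - 1) := by
          rw [← Real.mul_rpow (le_of_lt hχ0) (by positivity),
            mul_div_cancel₀ _ (ne_of_gt hχ0)]
        rw [h2]
        refine mul_le_mul_of_nonneg_left ?_ (by positivity)
        rw [Real.rpow_def_of_pos (by positivity)]
        exact Real.exp_le_exp.mpr (by nlinarith)
      calc Real.exp (-t) * t ^ (a - 1)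
          ≤ Real.exp (-t) * (χ ^ (a - 1) * Real.exp ((a - 1) * (t / χ - 1))) :=
            mul_le_mul_of_nonneg_left hpt (le_of_lt (Real.exp_pos _))
        _ = C * Real.exp (-b * t) := by
            have e1 : Real.exp (-t) * Real.exp ((a-1)*(t/χ-1))
                = Real.exp (-(a-1)) * Real.exp (-(1-(a-1)/χ)*t) := by
              rw [← Real.exp_add, ← Real.exp_add]
              congr 1
              field_simp
              ring
            calc Real.exp (-t) * (χ ^ (a-1) * Real.exp ((a-1)*(t/χ-1)))
                = χ ^ (a-1) * (Real.exp (-t) * Real.exp ((a-1)*(t/χ-1))) := by ring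
              _ = χ ^ (a-1) * (Real.exp (-(a-1)) * Real.exp (-(1-(a-1)/χ)*t)) := by rw [e1]
              _ = C * Real.exp (-b * t) := by rw [hC, hbdef]; ring
    have := integral_mono_of_nonneg hnn hgi hle
    rw [upperGamma]
    refine this.trans ?_
    rw [MeasureTheory.integral_const_mul, integral_exp_neg_mul_Ioi' hb]
    have key : C * (Real.exp (-b * χ) / b) = χ ^ (a - 1) * Real.exp (-χ) / b := by
      have e2 : Real.exp (-(a - 1)) * Real.exp (-b * χ) = Real.exp (-χ) := by
        rw [← Real.exp_add]
        congr 1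
        rw [hbdef]
        field_simp
        ring
      calc C * (Real.exp (-b*χ)/b)
          = (Real.exp (-(a-1)) * Real.exp (-b*χ)) * χ ^ (a-1) / b := by rw [hC]; ring
        _ = χ ^ (a-1) * Real.exp (-χ) / b := by rw [e2]; ring
    rw [key]
    have hinv : 1 / b ≤ χ := by
      rw [div_le_iff₀ hb]
      rw [div_le_iff₀ hχ0] at hbχ
      nlinarith
    have hrpos : 0 ≤ χ ^ (a - 1) * Real.exp (-χ) := by positivity
    have hsplit : χ ^ a = χ ^ (a - 1) * χ := by
      rw [← Real.rpow_add_one (ne_of_gt hχ0)]; ring_nf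
    calc χ ^ (a-1) * Real.exp (-χ) / b = (χ ^ (a-1) * Real.exp (-χ)) * (1 / b) := by ring
      _ ≤ (χ ^ (a-1) * Real.exp (-χ)) * χ := mul_le_mul_of_nonneg_left hinv hrpos
      _ = χ ^ a * Real.exp (-χ) := by rw [hsplit]; ring

theorem tail_bound (M c u₀ : ℝ) (hM : 0 < M) (hc : 0 < c) (hu₀ : 0 < u₀) (hu₀c : u₀ ≤ c)
    (n : ℕ) (hn : 1 ≤ n) (hnM : (n : ℝ) < M * u₀ * c) :
    ∑ k ∈ Finset.range n,
        (M * c ^ 2) ^ (-(k : ℝ)) / (4 ^ k * k.factorial) * upperGamma (2 * k) (2 * M * u₀ * c) <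
      2 * Real.exp (-(M * u₀ * c)) := by
  set χ := 2 * M * u₀ * c with hχdef
  set x := M * u₀ ^ 2 with hxdef
  have hn1 : (1:ℝ) ≤ (n:ℝ) := by exact_mod_cast hn
  have hMuc : 1 < M * u₀ * c := lt_of_le_of_lt hn1 hnM
  have hχ1 : 1 ≤ χ := by rw [hχdef]; nlinarith
  have hχ0 : 0 < χ := lt_of_lt_of_le one_pos hχ1
  have hMc2 : (0:ℝ) < M * c ^ 2 := by positivity
  have hterm : ∀ k ∈ Finset.range n,
      (M * c ^ 2) ^ (-(k : ℝ)) / (4 ^ k * k.factorial) * upperGamma (2 * k) χ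
        ≤ x ^ k / k.factorial * Real.exp (-χ) := by
    intro k hk
    rw [Finset.mem_range] at hk
    have hkn : (k:ℝ) + 1 ≤ (n:ℝ) := by exact_mod_cast hk
    have haχ : 2 * (k:ℝ) ≤ χ := by rw [hχdef]; nlinarith
    have hG := upperGamma_le hχ1 (by positivity) haχ
    have hcoef : 0 ≤ (M * c ^ 2) ^ (-(k : ℝ)) / (4 ^ k * k.factorial) := by positivity
    calc (M * c ^ 2) ^ (-(k : ℝ)) / (4 ^ k * k.factorial) * upperGamma (2 * k) χ
        ≤ (M * c ^ 2) ^ (-(k : ℝ)) / (4 ^ k * k.factorial) * (χ ^ (2 * (k:ℝ)) * Real.exp (-χ)) :=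
          mul_le_mul_of_nonneg_left hG hcoef
      _ = x ^ k / k.factorial * Real.exp (-χ) := by
          have h1 : (M * c ^ 2) ^ (-(k : ℝ)) = ((M * c ^ 2) ^ k)⁻¹ := by
            rw [Real.rpow_neg (le_of_lt hMc2), Real.rpow_natCast]
          have h2 : χ ^ (2 * (k:ℝ)) = χ ^ (2 * k) := by
            rw [← Real.rpow_natCast χ (2 * k)]
            congr 1
            push_cast
            ring
          have h3 : χ ^ (2 * k) = 4 ^ k * (M * c ^ 2) ^ k * x ^ k := by
            rw [pow_mul, ← mul_pow, ← mul_pow]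
            congr 1
            rw [hχdef, hxdef]
            ring
          rw [h1, h2, h3]
          have h4 : ((M * c ^ 2) ^ k : ℝ) ≠ 0 := by positivity
          have h5 : ((k.factorial : ℝ)) ≠ 0 := by positivity
          field_simp
  calc ∑ k ∈ Finset.range n,
        (M * c ^ 2) ^ (-(k : ℝ)) / (4 ^ k * k.factorial) * upperGamma (2 * k) χ
      ≤ ∑ k ∈ Finset.range n, x ^ k / k.factorial * Real.exp (-χ) :=
        Finset.sum_le_sum hterm
    _ = (∑ k ∈ Finset.range n, x ^ k / k.factorial) * Real.exp (-χ) := by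
        rw [Finset.sum_mul]
    _ ≤ Real.exp x * Real.exp (-χ) :=
        mul_le_mul_of_nonneg_right (Real.sum_le_exp_of_nonneg (by positivity) n)
          (le_of_lt (Real.exp_pos _))
    _ = Real.exp (x + -χ) := (Real.exp_add _ _).symm
    _ ≤ Real.exp (-(M * u₀ * c)) := by
        apply Real.exp_le_exp.mpr
        rw [hxdef, hχdef]
        nlinarith [mul_pos hM hu₀]
    _ < 2 * Real.exp (-(M * u₀ * c)) := by
        linarith [Real.exp_pos (-(M * u₀ * c))]
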